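/- arXiv:2107.09590 — 5 statements merged into one kernel-verified Lean document; each statement's English description precedes it below -/
import Mathlib

section
/- (h-reduction) Let X and Y be disjoint finite alphabets with |Y| ≤ c, and let r ≥ 1. Then h_{c+r}(X) = Σ_{i=0}^{c} (-1)^{c-i} · s(r−1, c−i)(X∪Y) · h_i(X), where s(i,j)(Z) := Σ_{k+l=j}(-1)^k h_{i+k+1}(Z) e_l(Z) is the hook Schur polynomial s_{(i+1,1^j)} of the alphabet Z = X∪Y. -/
open Finset

variable {R : Type*} [CommRing R]

/-- The elementary symmetric polynomial `e k` of a finite family of ring elements. -/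
def esym {ι : Type*} [Fintype ι] [DecidableEq ι] (x : ι → R) (k : ℕ) : R :=
  ∑ s ∈ Finset.univ.powersetCard k, ∏ i ∈ s, x i

/-- The complete homogeneous symmetric polynomial `h k` of a finite family of ring
elements (sum of all monomials of degree `k`). -/
def hsym {ι : Type*} [Fintype ι] [DecidableEq ι] (x : ι → R) (k : ℕ) : R :=
  ∑ μ : Sym ι k, (μ.1.map x).prod

/-- The hook Schur polynomial `s(i,j) = s_{(i+1,1^j)}` of a finite family. -/
def hookS {ι : Type*} [Fintype ι] [DecidableEq ι] (x : ι → R) (i j : ℕ) : R :=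
  ∑ p ∈ Finset.HasAntidiagonal.antidiagonal j, (-1 : R) ^ p.1 * hsym x (i + p.1 + 1) * esym x p.2

/-- The complete symmetric function `h j` of the difference alphabet `X - X'`. -/
def hdiff {ι κ : Type*} [Fintype ι] [DecidableEq ι] [Fintype κ] [DecidableEq κ]
    (x : ι → R) (x' : κ → R) (j : ℕ) : R :=
  ∑ p ∈ Finset.HasAntidiagonal.antidiagonal j, (-1 : R) ^ p.2 * hsym x p.1 * esym x' p.2

/-- The elementary symmetric function `e j` of the difference alphabet `X - X'`. -/
def ediff {ι κ : Type*} [Fintype ι] [DecidableEq ι] [Fintype κ] [DecidableEq κ]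
    (x : ι → R) (x' : κ → R) (j : ℕ) : R :=
  ∑ p ∈ Finset.HasAntidiagonal.antidiagonal j, (-1 : R) ^ p.2 * esym x p.1 * hsym x' p.2

/-- The power sum `p k` of a finite family of ring elements. -/
def psum' {ι : Type*} [Fintype ι] (x : ι → R) (k : ℕ) : R :=
  ∑ i, x i ^ k

/-- The elementary symmetric polynomial of a multiset of ring elements. -/
def esymM (s : Multiset R) (k : ℕ) : R :=
  ((s.powersetCard k).map Multiset.prod).sum

noncomputable def Eser {ι : Type*} [Fintype ι] [DecidableEq ι] (x : ι → R) : PowerSeries R :=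
  ∏ i, (1 - PowerSeries.C (x i) * PowerSeries.X)

noncomputable def Hser {ι : Type*} [Fintype ι] [DecidableEq ι] (x : ι → R) : PowerSeries R :=
  ∏ i, PowerSeries.mk (fun k => x i ^ k)

lemma one_sub_mul_geom (a : R) :
    (1 - PowerSeries.C a * PowerSeries.X) * PowerSeries.mk (fun k => a ^ k) = 1 := by
  ext n
  rw [sub_mul, one_mul, map_sub, mul_assoc]
  cases n with
  | zero => simp
  | succ n =>
      rw [PowerSeries.coeff_C_mul, PowerSeries.coeff_succ_X_mul]
      simp [pow_succ, mul_comm]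

lemma coeff_Hser {ι : Type*} [Fintype ι] [DecidableEq ι] (x : ι → R) (n : ℕ) :
    PowerSeries.coeff n (Hser x) = hsym x n := by
  rw [Hser, PowerSeries.coeff_prod]
  simp only [PowerSeries.coeff_mk]
  rw [hsym]
  have hsum : ∀ l : ι →₀ ℕ, ∑ i : ι, l i = Multiset.card l.toMultiset := by
    intro l
    rw [Finsupp.card_toMultiset, Finsupp.sum]
    exact (Finset.sum_subset (Finset.subset_univ _) (by
      intro i _ hi
      simpa using Finsupp.notMem_support_iff.1 hi)).symm
  refine Finset.sum_bij'
    (i := fun l (hl : l ∈ Finset.univ.finsuppAntidiag n) =>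
      (⟨Finsupp.toMultiset l, ?_⟩ : Sym ι n))
    (j := fun (μ : Sym ι n) _ => (μ : Multiset ι).toFinsupp) ?_ ?_ ?_ ?_ ?_
  · rw [Finset.mem_finsuppAntidiag] at hl
    rw [← hl.1, hsum]
  · intro l hl; exact Finset.mem_univ _
  · intro μ _
    rw [Finset.mem_finsuppAntidiag]
    constructor
    · rw [hsum, Multiset.toFinsupp_toMultiset]
      exact μ.2
    · exact Finset.subset_univ _
  · intro l hl
    simp [Finsupp.toMultiset_toFinsupp]
  · intro μ _
    exact Subtype.ext (by simp [Multiset.toFinsupp_toMultiset])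
  · intro l hl
    show ∏ i : ι, x i ^ l i = ((l.toMultiset).map x).prod
    rw [Finset.prod_multiset_map_count, Finsupp.toFinset_toMultiset]
    rw [show (∏ i ∈ l.support, x i ^ Multiset.count i l.toMultiset)
        = ∏ i ∈ l.support, x i ^ l i from
      Finset.prod_congr rfl fun i _ => by rw [Finsupp.count_toMultiset]]
    exact (Finset.prod_subset (Finset.subset_univ _) fun i _ hi => by
      rw [Finsupp.notMem_support_iff.1 hi, pow_zero]).symm

lemma coeff_Eser {ι : Type*} [Fintype ι] [DecidableEq ι] (x : ι → R) (n : ℕ) :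
    PowerSeries.coeff n (Eser x) = (-1) ^ n * esym x n := by
  have h1 : Eser x = ∏ i : ι, (PowerSeries.C (-x i) * PowerSeries.X + 1) := by
    rw [Eser]; congr 1; ext i; rw [map_neg]; ring
  rw [h1, Finset.prod_add]
  simp only [Finset.prod_const_one, mul_one]
  have h2 : ∀ t : Finset ι, ∏ i ∈ t, (PowerSeries.C (-x i) * PowerSeries.X)
      = PowerSeries.C (∏ i ∈ t, (-x i)) * PowerSeries.X ^ t.card := by
    intro t
    rw [Finset.prod_mul_distrib, map_prod, Finset.prod_const]
  rw [map_sum]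
  simp only [h2, PowerSeries.coeff_C_mul, PowerSeries.coeff_X_pow, mul_ite, mul_one, mul_zero]
  rw [Finset.sum_ite, Finset.sum_const_zero, add_zero, esym, Finset.mul_sum]
  rw [Finset.powersetCard_eq_filter]
  have h3 : Finset.filter (fun t => n = t.card) Finset.univ.powerset
      = Finset.filter (fun t : Finset ι => t.card = n) Finset.univ.powerset := by
    apply Finset.filter_congr; intro t _; simp [eq_comm]
  rw [h3]
  apply Finset.sum_congr rfl
  intro t ht
  rw [Finset.mem_filter] at ht
  rw [← ht.2]
  rw [← Finset.prod_const, ← Finset.prod_mul_distrib]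
  apply Finset.prod_congr rfl
  intro i _; ring

lemma Eser_mul_Hser {ι : Type*} [Fintype ι] [DecidableEq ι] (x : ι → R) :
    Eser x * Hser x = 1 := by
  rw [Eser, Hser, ← Finset.prod_mul_distrib]
  simp [one_sub_mul_geom]

lemma Hser_sum {ι κ : Type*} [Fintype ι] [DecidableEq ι] [Fintype κ] [DecidableEq κ]
    (x : ι → R) (y : κ → R) : Hser (Sum.elim x y) = Hser x * Hser y := by
  rw [Hser, Hser, Hser, Fintype.prod_sum_type]
  simp

lemma Eser_sum {ι κ : Type*} [Fintype ι] [DecidableEq ι] [Fintype κ] [DecidableEq κ]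
    (x : ι → R) (y : κ → R) : Eser (Sum.elim x y) = Eser x * Eser y := by
  rw [Eser, Eser, Eser, Fintype.prod_sum_type]
  simp

lemma esym_eq_zero {κ : Type*} [Fintype κ] [DecidableEq κ] (y : κ → R) {m : ℕ}
    (h : Fintype.card κ < m) : esym y m = 0 := by
  rw [esym, Finset.powersetCard_eq_empty.2 (by simpa using h), Finset.sum_empty]

theorem h_reduction {ι κ : Type*} [Fintype ι] [DecidableEq ι] [Fintype κ] [DecidableEq κ]
    (c r : ℕ) (hr : 1 ≤ r) (hY : Fintype.card κ ≤ c) (x : ι → R) (y : κ → R) :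
    hsym x (c + r) =
      ∑ i ∈ Finset.range (c + 1),
        (-1 : R) ^ (c - i) * hookS (Sum.elim x y) (r - 1) (c - i) * hsym x i := by
  set z : ι ⊕ κ → R := Sum.elim x y with hzdef
  have key1 : Eser z * Hser x = Eser y := by
    rw [hzdef, Eser_sum, mul_right_comm, Eser_mul_Hser, one_mul]
  have key2 : Hser z * Eser y = Hser x := by
    rw [hzdef, Hser_sum, mul_assoc, mul_comm (Hser y), Eser_mul_Hser, mul_one]
  set G : PowerSeries R := PowerSeries.mk fun k => hsym z (r + k) with hG
  have hhook : ∀ j : ℕ, (-1 : R) ^ j * hookS z (r - 1) j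
      = PowerSeries.coeff j (G * Eser z) := by
    intro j
    rw [PowerSeries.coeff_mul, hookS, Finset.mul_sum]
    apply Finset.sum_congr rfl
    intro q hq
    rw [Finset.HasAntidiagonal.mem_antidiagonal] at hq
    rw [hG, PowerSeries.coeff_mk, coeff_Eser]
    have h1 : r - 1 + q.1 + 1 = r + q.1 := by omega
    rw [h1, ← hq]
    have hsgn : (-1 : R) ^ (q.1 + q.2) * (-1) ^ q.1 = (-1) ^ q.2 := by
      rw [pow_add, mul_right_comm, ← mul_pow]; simp
    linear_combination (hsym z (r + q.1) * esym z q.2) * hsgn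
  calc hsym x (c + r) = PowerSeries.coeff (c + r) (Hser x) := (coeff_Hser x _).symm
    _ = PowerSeries.coeff (c + r) (Hser z * Eser y) := by rw [key2]
    _ = ∑ a ∈ range (c + r + 1), hsym z a * ((-1 : R) ^ (c + r - a) * esym y (c + r - a)) := by
        rw [PowerSeries.coeff_mul, Finset.Nat.sum_antidiagonal_eq_sum_range_succ_mk]
        simp [coeff_Hser, coeff_Eser]
    _ = ∑ a ∈ Finset.Ico r (c + r + 1),
          hsym z a * ((-1 : R) ^ (c + r - a) * esym y (c + r - a)) := by
        refine (Finset.sum_subset ?_ ?_).symm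
        · intro a ha; rw [Finset.mem_Ico] at ha; rw [Finset.mem_range]; omega
        · intro a ha hna
          rw [Finset.mem_range] at ha; rw [Finset.mem_Ico] at hna
          rw [esym_eq_zero y (show Fintype.card κ < c + r - a by omega)]; ring
    _ = ∑ k ∈ range (c + 1), hsym z (r + k) * ((-1 : R) ^ (c - k) * esym y (c - k)) := by
        rw [Finset.sum_Ico_eq_sum_range, show c + r + 1 - r = c + 1 by omega]
        apply Finset.sum_congr rfl
        intro k hk
        rw [Finset.mem_range] at hk
        rw [show c + r - (r + k) = c - k by omega]
    _ = PowerSeries.coeff c (G * Eser y) := by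
        rw [PowerSeries.coeff_mul, Finset.Nat.sum_antidiagonal_eq_sum_range_succ_mk]
        simp [coeff_Eser, hG]
    _ = PowerSeries.coeff c (Hser x * (G * Eser z)) := by
        rw [show Hser x * (G * Eser z) = G * (Eser z * Hser x) by ring, key1]
    _ = ∑ i ∈ range (c + 1), hsym x i * PowerSeries.coeff (c - i) (G * Eser z) := by
        rw [PowerSeries.coeff_mul, Finset.Nat.sum_antidiagonal_eq_sum_range_succ_mk]
        simp [coeff_Hser]
    _ = ∑ i ∈ Finset.range (c + 1), (-1 : R) ^ (c - i) * hookS z (r - 1) (c - i) * hsym x i := by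
        apply Finset.sum_congr rfl
        intro i _
        rw [← hhook]; ring
end

section
/- (Monomial reduction) Let a ≥ 1, let X = {x_1,...,x_a}, and let m ≥ a. Then for each 1 ≤ i ≤ a: x_i^m = Σ_{j=1}^{a} (-1)^{a-j} · s(m−a, a−j)(X) · x_i^{j-1}, where s(i,j)(X) := Σ_{k+l=j}(-1)^k h_{i+k+1}(X) e_l(X) is the hook Schur polynomial s_{(i+1,1^j)}(X). -/
open Finset

variable {R : Type*} [CommRing R]

section Aux

set_option linter.unusedSectionVars false

variable {ι : Type*} [Fintype ι] [DecidableEq ι]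

lemma esym_eq_esymm (x : ι → R) (k : ℕ) : esym x k = (Finset.univ.val.map x).esymm k := by
  rw [Finset.esymm_map_val]; rfl

lemma esym_zero' (x : ι → R) : esym x 0 = 1 := by simp [esym]

lemma hsym_zero' (x : ι → R) : hsym x 0 = 1 := by
  simp [hsym, Sym.eq_nil_of_card_zero]

lemma esym_card_lt (x : ι → R) {k : ℕ} (h : Fintype.card ι < k) : esym x k = 0 := by
  rw [esym, Finset.powersetCard_eq_empty.mpr (by simpa using h), Finset.sum_empty]

lemma hsym_isEmpty [IsEmpty ι] (x : ι → R) {k : ℕ} (hk : 1 ≤ k) : hsym x k = 0 := by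
  have : IsEmpty (Sym ι k) := ⟨fun μ => by
    obtain ⟨y, -⟩ := Multiset.exists_mem_of_ne_zero (s := μ.1) (by
      intro h0
      have := μ.2
      rw [h0] at this
      simp at this
      omega)
    exact isEmptyElim y⟩
  rw [hsym, Finset.univ_eq_empty, Finset.sum_empty]

lemma esymm_cons (r : R) (s : Multiset R) (n : ℕ) :
    (r ::ₘ s).esymm (n+1) = s.esymm (n+1) + r * s.esymm n := by
  rw [Multiset.esymm, Multiset.powersetCard_cons, Multiset.map_add, Multiset.sum_add,
    Multiset.map_map]
  congr 1
  rw [Multiset.esymm, ← Multiset.sum_map_mul_left]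
  congr 1
  apply Multiset.map_congr rfl
  intro t _
  simp [Multiset.prod_cons]

lemma univ_option_val : (Finset.univ : Finset (Option ι)).val
    = none ::ₘ (Finset.univ.val.map some) := by
  rfl

lemma esym_option (x : Option ι → R) (n : ℕ) :
    esym x (n+1) = esym (x ∘ some) (n+1) + x none * esym (x ∘ some) n := by
  rw [esym_eq_esymm, esym_eq_esymm, esym_eq_esymm, univ_option_val, Multiset.map_cons,
    esymm_cons, Multiset.map_map]

lemma hsym_option (x : Option ι → R) (n : ℕ) :
    hsym x (n+1) = hsym (x ∘ some) (n+1) + x none * hsym x n := by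
  have key := Fintype.sum_equiv (symOptionSuccEquiv (α := ι) (n := n)).symm
    (fun s => Sum.elim (fun (s : Sym (Option ι) n) => x none * (Multiset.map x ↑s).prod)
      (fun (s : Sym ι (n+1)) => (Multiset.map (x ∘ some) ↑s).prod) s)
    (fun μ => (Multiset.map x (μ : Multiset (Option ι))).prod) ?_
  · have h0 : hsym x (n+1)
        = ∑ μ : Sym (Option ι) n.succ, (Multiset.map x (μ : Multiset (Option ι))).prod := rfl
    rw [h0, ← key, Fintype.sum_sum_type]
    simp only [Sum.elim_inl, Sum.elim_inr]
    rw [add_comm, hsym, hsym, Finset.mul_sum]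
    rfl
  · rintro (s | s)
    · show x none * (Multiset.map x (s : Multiset (Option ι))).prod
        = (Multiset.map x ((none ::ₛ s : Sym (Option ι) (n+1)) : Multiset (Option ι))).prod
      rw [Sym.coe_cons, Multiset.map_cons, Multiset.prod_cons]
    · show (Multiset.map (x ∘ some) (s : Multiset ι)).prod
        = (Multiset.map x ((s.map some : Sym (Option ι) (n+1)) : Multiset (Option ι))).prod
      rw [Sym.coe_map, Multiset.map_map]

lemma esym_comp_equiv {κ : Type*} [Fintype κ] [DecidableEq κ] (e : κ ≃ ι) (x : ι → R) (k : ℕ) :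
    esym (x ∘ e) k = esym x k := by
  rw [esym_eq_esymm, esym_eq_esymm]
  congr 1
  have h : (Finset.univ.val.map (⇑e) : Multiset ι) = Finset.univ.val := by
    have := congr_arg Finset.val (Finset.map_univ_equiv e)
    simpa using this
  rw [show ((x ∘ e : κ → R)) = x ∘ e from rfl, ← Multiset.map_map x (⇑e), h]

lemma hsym_comp_equiv {κ : Type*} [Fintype κ] [DecidableEq κ] (e : κ ≃ ι) (x : ι → R) (k : ℕ) :
    hsym (x ∘ e) k = hsym x k := by
  rw [hsym, hsym]
  apply Fintype.sum_equiv (Sym.equivCongr e)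
  intro μ
  show (Multiset.map (x ∘ e) (μ : Multiset κ)).prod
    = (Multiset.map x ((μ.map e : Sym ι k) : Multiset ι)).prod
  rw [Sym.coe_map, Multiset.map_map]

lemma he_option (x : Option ι → R)
    (IH : ∀ n, 1 ≤ n →
      ∑ p ∈ Finset.HasAntidiagonal.antidiagonal n, (-1:R)^p.2 * hsym (x ∘ some) p.1 * esym (x ∘ some) p.2 = 0)
    (n : ℕ) (hn : 1 ≤ n) :
    ∑ p ∈ Finset.HasAntidiagonal.antidiagonal n, (-1:R)^p.2 * hsym x p.1 * esym x p.2 = 0 := by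
  obtain ⟨N, rfl⟩ : ∃ N, n = N + 1 := ⟨n - 1, by omega⟩
  set y := x none with hy
  set B : ℕ → R := fun n =>
    ∑ p ∈ Finset.HasAntidiagonal.antidiagonal n, (-1:R)^p.2 * hsym x p.1 * esym (x ∘ some) p.2 with hB
  have claim1 : ∀ M : ℕ,
      ∑ p ∈ Finset.HasAntidiagonal.antidiagonal (M+1), (-1:R)^p.2 * hsym x p.1 * esym x p.2
        = B (M+1) - y * B M := by
    intro M
    rw [Finset.Nat.sum_antidiagonal_succ'
      (f := fun p => (-1:R)^p.2 * hsym x p.1 * esym x p.2)]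
    rw [hB]
    simp only []
    rw [Finset.Nat.sum_antidiagonal_succ'
      (f := fun p => (-1:R)^p.2 * hsym x p.1 * esym (x ∘ some) p.2)]
    have h1 : ∀ p : ℕ × ℕ, p ∈ Finset.HasAntidiagonal.antidiagonal M →
        (-1:R)^(p.2+1) * hsym x p.1 * esym x (p.2+1)
          = (-1:R)^(p.2+1) * hsym x p.1 * esym (x ∘ some) (p.2+1)
            - y * ((-1:R)^p.2 * hsym x p.1 * esym (x ∘ some) p.2) := by
      intro p _
      rw [esym_option]
      ring
    rw [Finset.sum_congr rfl h1, Finset.sum_sub_distrib, ← Finset.mul_sum]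
    have h2 : esym x 0 = esym (x ∘ some) 0 := by rw [esym_zero', esym_zero']
    rw [h2]
    ring
  have claim2 : ∀ M : ℕ,
      B (M+1) = (∑ p ∈ Finset.HasAntidiagonal.antidiagonal (M+1),
        (-1:R)^p.2 * hsym (x ∘ some) p.1 * esym (x ∘ some) p.2) + y * B M := by
    intro M
    rw [hB]
    simp only []
    rw [Finset.Nat.sum_antidiagonal_succ
      (f := fun p => (-1:R)^p.2 * hsym x p.1 * esym (x ∘ some) p.2)]
    rw [Finset.Nat.sum_antidiagonal_succ
      (f := fun p => (-1:R)^p.2 * hsym (x ∘ some) p.1 * esym (x ∘ some) p.2)]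
    have h1 : ∀ p : ℕ × ℕ, p ∈ Finset.HasAntidiagonal.antidiagonal M →
        (-1:R)^p.2 * hsym x (p.1+1) * esym (x ∘ some) p.2
          = (-1:R)^p.2 * hsym (x ∘ some) (p.1+1) * esym (x ∘ some) p.2
            + y * ((-1:R)^p.2 * hsym x p.1 * esym (x ∘ some) p.2) := by
      intro p _
      rw [hsym_option]
      ring
    rw [Finset.sum_congr rfl h1, Finset.sum_add_distrib, ← Finset.mul_sum]
    have h2 : hsym x 0 = hsym (x ∘ some) 0 := by rw [hsym_zero', hsym_zero']
    rw [h2]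
    ring
  rw [claim1 N, claim2 N, IH (N+1) (by omega)]
  ring

lemma he_fin {a : ℕ} (x : Fin a → R) (n : ℕ) (hn : 1 ≤ n) :
    ∑ p ∈ Finset.HasAntidiagonal.antidiagonal n, (-1:R)^p.2 * hsym x p.1 * esym x p.2 = 0 := by
  induction a generalizing n with
  | zero =>
    apply Finset.sum_eq_zero
    intro p hp
    rw [Finset.HasAntidiagonal.mem_antidiagonal] at hp
    rcases Nat.eq_zero_or_pos p.1 with h1 | h1
    · have : 1 ≤ p.2 := by omega
      rw [esym_card_lt x (by simp; omega), mul_zero]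
    · rw [hsym_isEmpty x h1, mul_zero, zero_mul]
  | succ b ih =>
    set e : Option (Fin b) ≃ Fin (b+1) := (finSuccEquiv b).symm with he
    have hx : ∀ k, hsym (x ∘ e) k = hsym x k := fun k => hsym_comp_equiv e x k
    have hex : ∀ k, esym (x ∘ e) k = esym x k := fun k => esym_comp_equiv e x k
    have := he_option (x ∘ e) (fun n hn => ih ((x ∘ e) ∘ some) n hn) n hn
    simpa only [hx, hex] using this

lemma neg_one_pow_sub {k a : ℕ} (h : k ≤ a) : ((-1:R))^(a-k) = (-1)^a * (-1)^k := by
  have h1 : ((-1:R))^(a-k) * (-1)^k = (-1)^a := by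
    rw [← pow_add, Nat.sub_add_cancel h]
  have h2 : ((-1:R))^k * (-1)^k = 1 := by
    rw [← mul_pow]; norm_num
  calc ((-1:R))^(a-k) = (-1)^(a-k) * ((-1)^k * (-1)^k) := by rw [h2, mul_one]
    _ = ((-1)^(a-k) * (-1)^k) * (-1)^k := by ring
    _ = (-1)^a * (-1)^k := by rw [h1]

lemma hookS_zero_right (x : ι → R) (p : ℕ) : hookS x p 0 = hsym x (p+1) := by
  simp [hookS, esym_zero']

lemma hookS_rec (x : ι → R) (p q : ℕ) :
    hookS x p (q+1) + hookS x (p+1) q = hsym x (p+1) * esym x (q+1) := by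
  rw [hookS, Finset.Nat.sum_antidiagonal_succ
    (f := fun r => (-1:R)^r.1 * hsym x (p + r.1 + 1) * esym x r.2)]
  rw [hookS]
  have h1 : ∀ r : ℕ × ℕ, r ∈ Finset.HasAntidiagonal.antidiagonal q →
      (-1:R)^(r.1+1) * hsym x (p + (r.1+1) + 1) * esym x r.2
        = -((-1:R)^r.1 * hsym x ((p+1) + r.1 + 1) * esym x r.2) := by
    intro r _
    have : p + (r.1+1) + 1 = (p+1) + r.1 + 1 := by omega
    rw [this]
    ring
  rw [Finset.sum_congr rfl h1, Finset.sum_neg_distrib]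
  simp [hsym_zero']

lemma hookS_zero_left {a : ℕ} (x : Fin a → R) (q : ℕ) : hookS x 0 q = esym x (q+1) := by
  have h0 := he_fin x (q+1) (by omega)
  rw [Finset.Nat.sum_antidiagonal_succ
    (f := fun p => (-1:R)^p.2 * hsym x p.1 * esym x p.2)] at h0
  simp only [hsym_zero', mul_one] at h0
  have key : ∑ p ∈ Finset.HasAntidiagonal.antidiagonal q, (-1:R)^p.2 * hsym x (p.1+1) * esym x p.2
      = -((-1:R)^(q+1) * esym x (q+1)) := by linear_combination h0
  have h2 : hookS x 0 q
      = (-1:R)^q * ∑ p ∈ Finset.HasAntidiagonal.antidiagonal q, (-1:R)^p.2 * hsym x (p.1+1) * esym x p.2 := by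
    rw [hookS, Finset.mul_sum]
    apply Finset.sum_congr rfl
    intro p hp
    rw [Finset.HasAntidiagonal.mem_antidiagonal] at hp
    have hs : ((-1:R))^p.1 = (-1)^q * (-1)^p.2 := by
      have : p.1 = q - p.2 := by omega
      rw [this, neg_one_pow_sub (by omega)]
    have : 0 + p.1 + 1 = p.1 + 1 := by omega
    rw [this, hs]
    ring
  rw [h2, key]
  have hs2 : ((-1:R))^q * -((-1:R)^(q+1)) = 1 := by
    rw [pow_succ]
    have : ((-1:R))^q * (-1)^q = 1 := by rw [← mul_pow]; norm_num
    calc ((-1:R))^q * -((-1:R)^q * -1) = (-1:R)^q * (-1)^q := by ring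
      _ = 1 := this
  rw [show ((-1:R))^q * -((-1:R)^(q+1) * esym x (q+1))
    = ((-1:R)^q * -((-1:R)^(q+1))) * esym x (q+1) from by ring, hs2, one_mul]

lemma hookS_card {a : ℕ} (x : Fin a → R) (p : ℕ) : hookS x p a = 0 := by
  have h0 := he_fin x (p + 1 + a) (by omega)
  set f : ℕ × ℕ → R := fun r => (-1:R)^r.2 * hsym x r.1 * esym x r.2 with hf
  rw [← Finset.sum_filter_add_sum_filter_not (Finset.HasAntidiagonal.antidiagonal (p+1+a)) (fun r => r.2 ≤ a) f]
    at h0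
  have h1 : ∑ r ∈ (Finset.HasAntidiagonal.antidiagonal (p+1+a)).filter (fun r => ¬ r.2 ≤ a), f r = 0 := by
    apply Finset.sum_eq_zero
    intro r hr
    rw [Finset.mem_filter] at hr
    rw [hf]
    simp only []
    rw [esym_card_lt x (by simpa using by omega : Fintype.card (Fin a) < r.2), mul_zero]
  rw [h1, add_zero] at h0
  have h2 : hookS x p a
      = (-1:R)^a * ∑ r ∈ (Finset.HasAntidiagonal.antidiagonal (p+1+a)).filter (fun r => r.2 ≤ a), f r := by
    rw [hookS, Finset.mul_sum]
    apply Finset.sum_nbij' (i := fun q => (p + 1 + q.1, q.2)) (j := fun r => (r.1 - (p+1), r.2))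
    · intro q hq
      rw [Finset.HasAntidiagonal.mem_antidiagonal] at hq
      rw [Finset.mem_filter, Finset.HasAntidiagonal.mem_antidiagonal]
      constructor
      · omega
      · simp; omega
    · intro r hr
      rw [Finset.mem_filter, Finset.HasAntidiagonal.mem_antidiagonal] at hr
      rw [Finset.HasAntidiagonal.mem_antidiagonal]
      omega
    · intro q hq
      simp only []
      rw [show p + 1 + q.1 - (p+1) = q.1 from by omega]
    · intro r hr
      rw [Finset.mem_filter, Finset.HasAntidiagonal.mem_antidiagonal] at hr
      simp only []
      rw [show p + 1 + (r.1 - (p+1)) = r.1 from by omega]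
    · intro q hq
      rw [Finset.HasAntidiagonal.mem_antidiagonal] at hq
      rw [hf]
      simp only []
      have hs : ((-1:R))^q.1 = (-1)^a * (-1)^q.2 := by
        have : q.1 = a - q.2 := by omega
        rw [this, neg_one_pow_sub (by omega)]
      rw [show p + q.1 + 1 = p + 1 + q.1 from by omega, hs]
      ring
  rw [h2, h0, mul_zero]

lemma pow_card {a : ℕ} (ha : 1 ≤ a) (x : Fin a → R) (i : Fin a) :
    x i ^ a = ∑ q ∈ Finset.range a, (-1:R)^q * esym x (q+1) * x i ^ (a-1-q) := by
  set s : Multiset R := (Finset.univ : Finset (Fin a)).val.map x with hs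
  have hcard : Multiset.card s = a := by simp [hs]
  set P : Polynomial R := (s.map fun t => Polynomial.X - Polynomial.C t).prod with hP
  have hmon : ∀ f ∈ s.map (fun t => Polynomial.X - Polynomial.C t), f.Monic := by
    intro f hf
    obtain ⟨t, -, rfl⟩ := Multiset.mem_map.mp hf
    exact Polynomial.monic_X_sub_C t
  have hdeg : P.natDegree < a + 1 := by
    have h1 : P.natDegree ≤ (Multiset.map Polynomial.natDegree
        (s.map fun t => Polynomial.X - Polynomial.C t)).sum :=
      Polynomial.natDegree_multiset_prod_le _
    have h2 : (Multiset.map Polynomial.natDegree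
        (s.map fun t => Polynomial.X - Polynomial.C t)).sum
        ≤ ((s.map fun _ => 1 : Multiset ℕ)).sum := by
      rw [Multiset.map_map]
      apply Multiset.sum_map_le_sum_map
      intro t _
      exact Polynomial.natDegree_X_sub_C_le t
    have h3 : ((s.map fun _ => 1 : Multiset ℕ)).sum = a := by
      simp [hcard]
    omega
  have heval : P.eval (x i) = 0 := by
    rw [hP, Polynomial.eval_multiset_prod, Multiset.map_map]
    apply Multiset.prod_eq_zero
    rw [Multiset.mem_map]
    refine ⟨x i, ?_, by simp⟩
    rw [hs, Multiset.mem_map]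
    exact ⟨i, Finset.mem_val.mpr (Finset.mem_univ i), rfl⟩
  have hcoeff : ∀ k, k ≤ a → P.coeff k = (-1:R)^(a-k) * esym x (a-k) := by
    intro k hk
    rw [hP, Multiset.prod_X_sub_C_coeff s (by omega), hcard, esym_eq_esymm]
  have hsum : ∑ k ∈ Finset.range (a+1), P.coeff k * (x i)^k = 0 := by
    rw [← Polynomial.eval_eq_sum_range' hdeg (x i), heval]
  rw [Finset.sum_range_succ] at hsum
  have hca : P.coeff a = 1 := by
    rw [hcoeff a le_rfl, Nat.sub_self, esym_zero', pow_zero, one_mul]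
  rw [hca, one_mul] at hsum
  have main : ∑ q ∈ Finset.range a, (-1:R)^q * esym x (q+1) * x i ^ (a-1-q)
      = ∑ k ∈ Finset.range a, -(P.coeff k * x i ^ k) := by
    apply Finset.sum_nbij' (i := fun q => a-1-q) (j := fun k => a-1-k)
    · intro q hq; rw [Finset.mem_range] at *; omega
    · intro k hk; rw [Finset.mem_range] at *; omega
    · intro q hq; rw [Finset.mem_range] at hq; omega
    · intro k hk; rw [Finset.mem_range] at hk; omega
    · intro q hq
      rw [Finset.mem_range] at hq
      rw [hcoeff (a-1-q) (by omega), show a - (a-1-q) = q+1 from by omega, pow_succ]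
      ring
  rw [main, Finset.sum_neg_distrib]
  linear_combination hsum

lemma pow_card' {b : ℕ} (x : Fin (b+1) → R) (i : Fin (b+1)) :
    x i ^ (b+1) = ∑ q ∈ Finset.range (b+1), (-1:R)^q * esym x (q+1) * x i ^ (b-q) := by
  rw [pow_card (by omega) x i]
  apply Finset.sum_congr rfl
  intro q hq
  rw [show b+1-1-q = b-q from by omega]

end Aux

theorem monomial_reduction (a : ℕ) (ha : 1 ≤ a) (x : Fin a → R) (m : ℕ) (hm : a ≤ m)
    (i : Fin a) :
    x i ^ m =
      ∑ j ∈ Finset.Icc 1 a, (-1 : R) ^ (a - j) * hookS x (m - a) (a - j) * x i ^ (j - 1) := by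
  obtain ⟨b, rfl⟩ : ∃ b, a = b + 1 := ⟨a - 1, by omega⟩
  have key : x i ^ m
      = ∑ q ∈ Finset.range (b+1), (-1:R)^q * hookS x (m-(b+1)) q * x i ^ (b-q) := by
    induction m, hm using Nat.le_induction with
    | base =>
      rw [Nat.sub_self, pow_card' x i]
      apply Finset.sum_congr rfl
      intro q hq
      rw [hookS_zero_left]
    | succ m hm ih =>
      set M := m - (b+1) with hM
      rw [show m+1-(b+1) = M + 1 from by omega]
      have hL : x i ^ (m+1)
          = ∑ q ∈ Finset.range (b+1), (-1:R)^q * hookS x M q * x i ^ ((b-q)+1) := by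
        rw [pow_succ, ih, Finset.sum_mul]
        apply Finset.sum_congr rfl
        intro q hq
        rw [pow_succ]
        ring
      rw [hL, Finset.sum_range_succ'
        (fun q => (-1:R)^q * hookS x M q * x i ^ ((b-q)+1)) b]
      have hR : ∑ q ∈ Finset.range (b+1), (-1:R)^q * hookS x (M+1) q * x i ^ (b-q)
          = hsym x (M+1) * (x i ^ (b+1))
            - ∑ q ∈ Finset.range (b+1), (-1:R)^q * hookS x M (q+1) * x i ^ (b-q) := by
        have h1 : ∀ q ∈ Finset.range (b+1),
            (-1:R)^q * hookS x (M+1) q * x i ^ (b-q)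
              = (-1)^q * (hsym x (M+1) * esym x (q+1)) * x i ^ (b-q)
                - (-1)^q * hookS x M (q+1) * x i ^ (b-q) := by
          intro q _
          have hq := hookS_rec x M q
          linear_combination ((-1:R)^q * x i ^ (b-q)) * hq
        rw [Finset.sum_congr rfl h1, Finset.sum_sub_distrib]
        congr 1
        have h2 : ∑ q ∈ Finset.range (b+1),
            (-1:R)^q * (hsym x (M+1) * esym x (q+1)) * x i ^ (b-q)
            = hsym x (M+1)
              * ∑ q ∈ Finset.range (b+1), (-1:R)^q * esym x (q+1) * x i ^ (b-q) := by
          rw [Finset.mul_sum]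
          apply Finset.sum_congr rfl
          intro q _
          ring
        rw [h2, ← pow_card' x i]
      rw [hR, Finset.sum_range_succ
        (fun q => (-1:R)^q * hookS x M (q+1) * x i ^ (b-q)) b]
      rw [hookS_card x M, hookS_zero_right]
      have h3 : ∀ q ∈ Finset.range b,
          (-1:R)^(q+1) * hookS x M (q+1) * x i ^ ((b-(q+1))+1)
            = -((-1:R)^q * hookS x M (q+1) * x i ^ (b-q)) := by
        intro q hq
        rw [Finset.mem_range] at hq
        rw [show (b-(q+1))+1 = b - q from by omega, pow_succ]
        ring
      rw [Finset.sum_congr rfl h3, Finset.sum_neg_distrib]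
      ring_nf
      rw [show b - 0 = b from rfl]
      ring
  rw [key]
  apply Finset.sum_nbij' (i := fun q => b + 1 - q) (j := fun j => b + 1 - j)
  · intro q hq; rw [Finset.mem_range] at hq; rw [Finset.mem_Icc]; omega
  · intro j hj; rw [Finset.mem_Icc] at hj; rw [Finset.mem_range]; omega
  · intro q hq; rw [Finset.mem_range] at hq; omega
  · intro j hj; rw [Finset.mem_Icc] at hj; omega
  · intro q hq
    rw [Finset.mem_range] at hq
    rw [show b + 1 - (b + 1 - q) = q from by omega, show b + 1 - q - 1 = b - q from by omega]
end

section
/- Let X and X' be disjoint alphabets each of cardinality c, and define h_j(X−X') := Σ_{p+q=j}(-1)^q h_p(X)e_q(X'). Then for every r ≥ 1: h_{c+r}(X−X') = Σ_{i=1}^{c} (-1)^{c-i} · s(r−1, c−i)(X) · h_i(X−X'), where s(i,j)(X) := Σ_{k+l=j}(-1)^k h_{i+k+1}(X) e_l(X) is the hook Schur polynomial of X. -/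
open Finset

variable {R : Type*} [CommRing R]

/-! ### Auxiliary lemmas -/

theorem aux_geom_inv (R : Type*) [CommRing R] (a : R) :
    (1 - PowerSeries.C a * PowerSeries.X) * PowerSeries.mk (fun n => a ^ n) = 1 := by
  have h : (1 - PowerSeries.C a * PowerSeries.X) * PowerSeries.mk (fun n => a ^ n)
      = PowerSeries.mk (fun n => a ^ n)
        - (PowerSeries.C a * PowerSeries.mk (fun n => a ^ n)) * PowerSeries.X := by ring
  rw [h]
  ext n
  cases n with
  | zero => simp
  | succ n =>
    simp [PowerSeries.coeff_succ_mul_X, pow_succ, mul_comm]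

theorem aux_coeffE {ι : Type*} [DecidableEq ι] (x : ι → R) (s : Finset ι) (k : ℕ) :
    PowerSeries.coeff k (∏ i ∈ s, (1 - PowerSeries.C (x i) * PowerSeries.X)) =
      (-1) ^ k * ∑ t ∈ s.powersetCard k, ∏ i ∈ t, x i := by
  induction s using Finset.induction_on generalizing k with
  | empty =>
    cases k with
    | zero => simp
    | succ n =>
      rw [Finset.powersetCard_eq_empty.2 (by simp)]
      simp [PowerSeries.coeff_one, Nat.succ_ne_zero]
  | @insert a s ha ih =>
    rw [Finset.prod_insert ha]
    have expand : (1 - PowerSeries.C (x a) * PowerSeries.X) *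
        (∏ i ∈ s, (1 - PowerSeries.C (x i) * PowerSeries.X)) =
        (∏ i ∈ s, (1 - PowerSeries.C (x i) * PowerSeries.X)) -
        (PowerSeries.C (x a) * ∏ i ∈ s, (1 - PowerSeries.C (x i) * PowerSeries.X)) *
          PowerSeries.X := by ring
    rw [expand, map_sub]
    cases k with
    | zero =>
      simp only [PowerSeries.coeff_zero_mul_X, sub_zero, ih 0]
      simp [Finset.powersetCard_zero]
    | succ n =>
      have hdisj : Disjoint (s.powersetCard (n+1))
          (Finset.image (insert a) (s.powersetCard n)) := by
        rw [Finset.disjoint_right]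
        intro t ht ht'
        simp only [Finset.mem_image] at ht
        obtain ⟨u, hu, rfl⟩ := ht
        rw [Finset.mem_powersetCard] at ht'
        exact ha (ht'.1 (Finset.mem_insert_self a u))
      have hinj : ∀ t ∈ s.powersetCard n, ∀ t' ∈ s.powersetCard n,
          insert a t = insert a t' → t = t' := by
        intro t ht t' ht' h
        rw [Finset.mem_powersetCard] at ht ht'
        have hat : a ∉ t := fun h' => ha (ht.1 h')
        have hat' : a ∉ t' := fun h' => ha (ht'.1 h')
        rw [← Finset.erase_insert hat, h, Finset.erase_insert hat']
      rw [PowerSeries.coeff_succ_mul_X, PowerSeries.coeff_C_mul, ih, ih,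
        Finset.powersetCard_succ_insert ha, Finset.sum_union hdisj, Finset.sum_image hinj]
      have himg : ∑ t ∈ s.powersetCard n, ∏ i ∈ insert a t, x i
          = x a * ∑ t ∈ s.powersetCard n, ∏ i ∈ t, x i := by
        rw [Finset.mul_sum]
        refine Finset.sum_congr rfl fun t ht => ?_
        rw [Finset.mem_powersetCard] at ht
        rw [Finset.prod_insert (fun h' => ha (ht.1 h'))]
      rw [himg]
      ring

lemma aux_sum_count_univ {ι : Type*} [Fintype ι] [DecidableEq ι] (s : Multiset ι) :
    ∑ i : ι, s.count i = Multiset.card s := by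
  rw [← Multiset.toFinset_sum_count_eq s]
  exact (Finset.sum_subset (subset_univ _) (fun i _ hi =>
    Multiset.count_eq_zero_of_notMem (by simpa using hi))).symm

theorem aux_coeffH {ι : Type*} [Fintype ι] [DecidableEq ι] (x : ι → R) (k : ℕ) :
    PowerSeries.coeff k (∏ i : ι, PowerSeries.mk (fun n => x i ^ n)) = hsym x k := by
  rw [PowerSeries.coeff_prod]
  simp only [PowerSeries.coeff_mk]
  rw [hsym]
  symm
  refine Finset.sum_bij' (fun (μ : Sym ι k) _ => Multiset.toFinsupp μ.1)
    (fun l _ => ⟨Finsupp.toMultiset l, ?_⟩) ?_ ?_ ?_ ?_ ?_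
  · rename_i l hl
    rw [Finsupp.card_toMultiset]
    rw [Finset.mem_finsuppAntidiag] at hl
    rw [← hl.1, Finsupp.sum_fintype _ _ (fun _ => rfl)]
    simp
  · intro μ _
    rw [Finset.mem_finsuppAntidiag]
    refine ⟨?_, subset_univ _⟩
    change ∑ i, Multiset.count i μ.1 = k
    rw [aux_sum_count_univ]
    exact μ.2
  · intro l hl; exact mem_univ _
  · intro μ _
    exact Subtype.ext (Multiset.toFinsupp_toMultiset _)
  · intro l hl
    exact Finsupp.toMultiset_toFinsupp _
  · intro μ _
    simp only [Multiset.toFinsupp_apply]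
    rw [Finset.prod_multiset_map_count]
    exact Finset.prod_subset (subset_univ _) (fun i _ hi => by
      rw [Multiset.count_eq_zero_of_notMem (by simpa using hi), pow_zero])

theorem aux_eh_orth {ι : Type*} [Fintype ι] [DecidableEq ι] (x : ι → R) {n : ℕ} (hn : n ≠ 0) :
    ∑ p ∈ Finset.HasAntidiagonal.antidiagonal n, (-1 : R) ^ p.1 * esym x p.1 * hsym x p.2 = 0 := by
  have key : (∏ i : ι, (1 - PowerSeries.C (x i) * PowerSeries.X)) *
      (∏ i : ι, PowerSeries.mk (fun n => x i ^ n)) = 1 := by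
    rw [← Finset.prod_mul_distrib]
    rw [Finset.prod_congr rfl (fun i _ => aux_geom_inv R (x i))]
    exact Finset.prod_const_one
  have h0 := congrArg (PowerSeries.coeff n) key
  rw [PowerSeries.coeff_mul, PowerSeries.coeff_one, if_neg hn] at h0
  rw [← h0]
  refine Finset.sum_congr rfl fun p _ => ?_
  rw [aux_coeffE, aux_coeffH, esym, mul_assoc]

lemma aux_sum_antidiagonal_snd (f : ℕ → ℕ → R) (n : ℕ) :
    ∑ p ∈ Finset.HasAntidiagonal.antidiagonal n, f p.1 p.2 = ∑ q ∈ Finset.range (n + 1), f (n - q) q := by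
  rw [← Finset.HasAntidiagonal.map_swap_antidiagonal, Finset.sum_map]
  exact Finset.Nat.sum_antidiagonal_eq_sum_range_succ (fun a b => f b a) n

lemma aux_esym_zero {ι : Type*} [Fintype ι] [DecidableEq ι] (x : ι → R) : esym x 0 = 1 := by
  simp [esym]

lemma aux_hsym_zero {ι : Type*} [Fintype ι] [DecidableEq ι] (x : ι → R) : hsym x 0 = 1 := by
  rw [hsym, Finset.univ_unique, Finset.sum_singleton]
  rfl

lemma aux_eh_delta {ι : Type*} [Fintype ι] [DecidableEq ι] (x : ι → R) (n : ℕ) :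
    ∑ p ∈ Finset.HasAntidiagonal.antidiagonal n, (-1 : R) ^ p.1 * esym x p.1 * hsym x p.2 =
      if n = 0 then 1 else 0 := by
  cases n with
  | zero => simp [aux_esym_zero, aux_hsym_zero]
  | succ n => rw [if_neg (Nat.succ_ne_zero n)]; exact aux_eh_orth x (Nat.succ_ne_zero n)

lemma aux_esym_eq_zero_of_lt {c k : ℕ} (x : Fin c → R) (h : c < k) : esym x k = 0 := by
  rw [esym, Finset.powersetCard_eq_empty.2 (by simpa using h), Finset.sum_empty]

lemma aux_neg_one_pow_sub (c l : ℕ) (h : l ≤ c) : ((-1 : R)) ^ (c - l) = (-1) ^ c * (-1) ^ l := by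
  rw [← pow_add, show c + l = (c - l) + 2 * l by omega, pow_add, pow_mul]
  simp

lemma aux_sum3 (m : ℕ) (F : ℕ → ℕ → ℕ → R) :
    ∑ j ∈ Finset.range (m + 1), ∑ p ∈ Finset.HasAntidiagonal.antidiagonal j, F p.1 p.2 (m - j) =
      ∑ p ∈ Finset.HasAntidiagonal.antidiagonal m, ∑ q ∈ Finset.HasAntidiagonal.antidiagonal p.2, F p.1 q.1 q.2 := by
  rw [Finset.sum_sigma', Finset.sum_sigma']
  refine Finset.sum_nbij' (fun a => ⟨(a.2.1, m - a.2.1), (a.2.2, m - a.1)⟩)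
    (fun b => ⟨b.1.1 + b.2.1, (b.1.1, b.2.1)⟩) ?_ ?_ ?_ ?_ ?_
  · rintro ⟨j, k, l⟩ h
    simp only [Finset.mem_sigma, Finset.mem_range, Finset.HasAntidiagonal.mem_antidiagonal] at h ⊢
    omega
  · rintro ⟨⟨k, s⟩, l, d⟩ h
    simp only [Finset.mem_sigma, Finset.mem_range, Finset.HasAntidiagonal.mem_antidiagonal] at h ⊢
    exact ⟨by omega, by trivial⟩
  · rintro ⟨j, k, l⟩ h
    simp only [Finset.mem_sigma, Finset.mem_range, Finset.HasAntidiagonal.mem_antidiagonal] at h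
    have : k + l = j := h.2
    subst this
    rfl
  · rintro ⟨⟨k, s⟩, l, d⟩ h
    simp only [Finset.mem_sigma, Finset.mem_range, Finset.HasAntidiagonal.mem_antidiagonal] at h
    have h1 : s = m - k := by omega
    have h2 : d = m - (k + l) := by omega
    subst h1; subst h2
    rfl
  · rintro ⟨j, k, l⟩ h
    rfl

/-- Key identity (B): `∑_{j=0}^m (-1)^j s(i,j) h_{m-j} = h_{m+i+1}`. -/
lemma aux_LB {ι : Type*} [Fintype ι] [DecidableEq ι] (x : ι → R) (i m : ℕ) :
    ∑ j ∈ Finset.range (m + 1), (-1 : R) ^ j * hookS x i j * hsym x (m - j)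
      = hsym x (m + i + 1) := by
  have step1 : ∀ j ∈ Finset.range (m + 1), (-1 : R) ^ j * hookS x i j * hsym x (m - j)
      = ∑ p ∈ Finset.HasAntidiagonal.antidiagonal j,
          (-1 : R) ^ p.2 * hsym x (i + p.1 + 1) * esym x p.2 * hsym x (m - j) := by
    intro j _
    rw [hookS, Finset.mul_sum, Finset.sum_mul]
    refine Finset.sum_congr rfl fun p hp => ?_
    rw [Finset.HasAntidiagonal.mem_antidiagonal] at hp
    have hsign : (-1 : R) ^ j * (-1 : R) ^ p.1 = (-1 : R) ^ p.2 := by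
      rw [← pow_add, show j + p.1 = p.2 + 2 * p.1 by omega, pow_add, pow_mul]
      simp
    linear_combination (hsym x (i + p.1 + 1) * esym x p.2 * hsym x (m - j)) * hsign
  rw [Finset.sum_congr rfl step1]
  rw [aux_sum3 m (fun k l d => (-1 : R) ^ l * hsym x (i + k + 1) * esym x l * hsym x d)]
  have step2 : ∀ p ∈ Finset.HasAntidiagonal.antidiagonal m,
      (∑ q ∈ Finset.HasAntidiagonal.antidiagonal p.2,
        (-1 : R) ^ q.1 * hsym x (i + p.1 + 1) * esym x q.1 * hsym x q.2)
      = hsym x (i + p.1 + 1) * (if p.2 = 0 then 1 else 0) := by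
    intro p _
    rw [← aux_eh_delta x p.2, Finset.mul_sum]
    refine Finset.sum_congr rfl fun q _ => by ring
  rw [Finset.sum_congr rfl step2]
  rw [Finset.sum_eq_single_of_mem (m, 0) (by simp)]
  · rw [if_pos rfl, mul_one]
    congr 1
    omega
  · intro p hp hne
    rw [Finset.HasAntidiagonal.mem_antidiagonal] at hp
    have : p.2 ≠ 0 := by
      intro h0
      apply hne
      have : p.1 = m := by omega
      exact Prod.ext this h0
    rw [if_neg this, mul_zero]

/-- Key identity (C): the hook Schur polynomial `s(i,c)` vanishes in `c` variables. -/
lemma aux_LC (c : ℕ) (x : Fin c → R) (i : ℕ) : hookS x i c = 0 := by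
  have horth := aux_eh_orth x (n := i + 1 + c) (by omega)
  rw [Finset.Nat.sum_antidiagonal_eq_sum_range_succ
    (fun a b => (-1 : R) ^ a * esym x a * hsym x b)] at horth
  have hrestrict : ∑ l ∈ Finset.range (c + 1),
      (-1 : R) ^ l * esym x l * hsym x (i + 1 + c - l) = 0 := by
    rw [← horth]
    exact Finset.sum_subset (Finset.range_subset_range.2 (by omega)) (fun l hl hls => by
      rw [aux_esym_eq_zero_of_lt x (by simp only [Finset.mem_range] at hl hls; omega),
        mul_zero, zero_mul])
  rw [hookS, Finset.Nat.sum_antidiagonal_eq_sum_range_succ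
    (fun a b => (-1 : R) ^ a * hsym x (i + a + 1) * esym x b)]
  rw [← Finset.sum_range_reflect]
  have step : ∀ l ∈ Finset.range (c + 1),
      (-1 : R) ^ (c + 1 - 1 - l) * hsym x (i + (c + 1 - 1 - l) + 1) * esym x (c - (c + 1 - 1 - l))
      = (-1 : R) ^ c * ((-1 : R) ^ l * esym x l * hsym x (i + 1 + c - l)) := by
    intro l hl
    rw [Finset.mem_range] at hl
    have h1 : c + 1 - 1 - l = c - l := by omega
    have h2 : c - (c - l) = l := by omega
    have h3 : i + (c - l) + 1 = i + 1 + c - l := by omega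
    rw [h1, h2, h3, aux_neg_one_pow_sub c l (by omega)]
    ring
  rw [Finset.sum_congr rfl step, ← Finset.mul_sum, hrestrict, mul_zero]

lemma aux_hdiff_eq {ι κ : Type*} [Fintype ι] [DecidableEq ι] [Fintype κ] [DecidableEq κ]
    (x : ι → R) (x' : κ → R) (j : ℕ) :
    hdiff x x' j = ∑ q ∈ Finset.range (j + 1), (-1 : R) ^ q * hsym x (j - q) * esym x' q := by
  rw [hdiff]
  exact aux_sum_antidiagonal_snd (fun a b => (-1 : R) ^ b * hsym x a * esym x' b) j

/-- Key identity for each fixed `q ≤ c`. -/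
lemma aux_key (c : ℕ) (x : Fin c → R) (r : ℕ) (hr : 1 ≤ r) {q : ℕ} (hq : q ≤ c) :
    ∑ i ∈ Finset.Icc q c, (-1 : R) ^ (c - i) * hookS x (r - 1) (c - i) * hsym x (i - q)
      = hsym x (c + r - q) := by
  rw [show Finset.Icc q c = Finset.Ico q (c + 1) by rw [Finset.Ico_add_one_right_eq_Icc],
    Finset.sum_Ico_eq_sum_range]
  set m := c - q with hm
  have hrange : c + 1 - q = m + 1 := by omega
  rw [hrange]
  have step : ∀ t ∈ Finset.range (m + 1),
      (-1 : R) ^ (c - (q + t)) * hookS x (r - 1) (c - (q + t)) * hsym x (q + t - q)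
      = (fun j => (-1 : R) ^ j * hookS x (r - 1) j * hsym x (m - j)) (m + 1 - 1 - t) := by
    intro t ht
    rw [Finset.mem_range] at ht
    have h1 : c - (q + t) = m - t := by omega
    have h2 : q + t - q = t := by omega
    have h3 : m + 1 - 1 - t = m - t := by omega
    have h4 : m - (m - t) = t := by omega
    simp only [h1, h2, h3, h4]
  rw [Finset.sum_congr rfl step,
    Finset.sum_range_reflect (fun j => (-1 : R) ^ j * hookS x (r - 1) j * hsym x (m - j)) (m + 1),
    aux_LB]
  congr 1
  omega

theorem hdiff_reduction (c : ℕ) (x x' : Fin c → R) (r : ℕ) (hr : 1 ≤ r) :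
    hdiff x x' (c + r) =
      ∑ i ∈ Finset.Icc 1 c, (-1 : R) ^ (c - i) * hookS x (r - 1) (c - i) * hdiff x x' i := by
  -- extend RHS to range (c+1): the i = 0 term vanishes by aux_LC
  have hins : Finset.range (c + 1) = insert 0 (Finset.Icc 1 c) := by
    ext a
    simp only [Finset.mem_range, Finset.mem_insert, Finset.mem_Icc]
    omega
  have hrhs : ∑ i ∈ Finset.Icc 1 c, (-1 : R) ^ (c - i) * hookS x (r - 1) (c - i) * hdiff x x' i
      = ∑ i ∈ Finset.range (c + 1),
          (-1 : R) ^ (c - i) * hookS x (r - 1) (c - i) * hdiff x x' i := by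
    rw [hins, Finset.sum_insert (by simp)]
    rw [Nat.sub_zero, aux_LC c x (r - 1), mul_zero, zero_mul, zero_add]
  rw [hrhs]
  -- LHS: restrict to q ≤ c
  rw [aux_hdiff_eq]
  have hlhs : ∑ q ∈ Finset.range (c + r + 1), (-1 : R) ^ q * hsym x (c + r - q) * esym x' q
      = ∑ q ∈ Finset.range (c + 1), (-1 : R) ^ q * hsym x (c + r - q) * esym x' q := by
    refine (Finset.sum_subset (Finset.range_subset_range.2 (by omega)) (fun q hq hqs => ?_)).symm
    rw [aux_esym_eq_zero_of_lt x' (by simp only [Finset.mem_range] at hq hqs; omega), mul_zero]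
  rw [hlhs]
  -- expand hdiff on the RHS and swap the double sum
  have hexp : ∀ i ∈ Finset.range (c + 1),
      (-1 : R) ^ (c - i) * hookS x (r - 1) (c - i) * hdiff x x' i
      = ∑ q ∈ Finset.range (c + 1), (if q ≤ i then
          (-1 : R) ^ (c - i) * hookS x (r - 1) (c - i) *
            ((-1 : R) ^ q * hsym x (i - q) * esym x' q) else 0) := by
    intro i hi
    rw [Finset.mem_range] at hi
    rw [aux_hdiff_eq, Finset.mul_sum, ← Finset.sum_filter]
    have : Finset.filter (fun q => q ≤ i) (Finset.range (c + 1)) = Finset.range (i + 1) := by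
      ext a
      simp only [Finset.mem_filter, Finset.mem_range]
      omega
    rw [this]
  rw [Finset.sum_congr rfl hexp, Finset.sum_comm]
  refine Finset.sum_congr rfl fun q hq => ?_
  rw [Finset.mem_range] at hq
  have hq' : q ≤ c := by omega
  rw [← Finset.sum_filter]
  have : Finset.filter (fun i => q ≤ i) (Finset.range (c + 1)) = Finset.Icc q c := by
    ext a
    simp only [Finset.mem_filter, Finset.mem_range, Finset.mem_Icc]
    omega
  rw [this]
  have step : ∀ i ∈ Finset.Icc q c,
      (-1 : R) ^ (c - i) * hookS x (r - 1) (c - i) * ((-1 : R) ^ q * hsym x (i - q) * esym x' q)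
      = ((-1 : R) ^ q * esym x' q) *
          ((-1 : R) ^ (c - i) * hookS x (r - 1) (c - i) * hsym x (i - q)) := by
    intro i _
    ring
  rw [Finset.sum_congr rfl step, ← Finset.mul_sum, aux_key c x r hr hq']
  ring
end

section
/- Let a ≥ b ≥ 1 and let M be the (a+b)×(a+b) matrix over k[x_1,...,x_{a+b}, w_{a+1},...,w_{a+b}] whose rows are: for 1 ≤ i ≤ a, the row (x_j^{a-i})_{j=1,...,a+b}; and for 1 ≤ s ≤ b, the row whose j-th entry is 0 for j ≤ a and x_j^{b-s}·w_j for a+1 ≤ j ≤ a+b. Then det(M) = ∏_{1≤i<j≤a}(x_i − x_j) · ∏_{j=a+1}^{a+b} w_j · ∏_{a+1≤i<j≤a+b}(x_i − x_j). -/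
open Finset

variable {R : Type*} [CommRing R]

lemma rev_pairs_prod (n : ℕ) (v : Fin n → R) :
    (∏ i : Fin n, ∏ j ∈ Finset.Ioi i, (v j.rev - v i.rev)) =
    ∏ i : Fin n, ∏ j ∈ Finset.Ioi i, (v i - v j) := by
  rw [Finset.prod_sigma', Finset.prod_sigma']
  refine Finset.prod_nbij' (fun p => ⟨p.2.rev, p.1.rev⟩) (fun p => ⟨p.2.rev, p.1.rev⟩) ?_ ?_ ?_ ?_ ?_
  · rintro ⟨i, j⟩ h
    simp only [Finset.mem_sigma, Finset.mem_univ, Finset.mem_Ioi, true_and] at h ⊢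
    exact Fin.rev_lt_rev.mpr h
  · rintro ⟨i, j⟩ h
    simp only [Finset.mem_sigma, Finset.mem_univ, Finset.mem_Ioi, true_and] at h ⊢
    exact Fin.rev_lt_rev.mpr h
  · rintro ⟨i, j⟩ _; simp
  · rintro ⟨i, j⟩ _; simp
  · rintro ⟨i, j⟩ _; simp

lemma det_rev_vandermonde (n : ℕ) (v : Fin n → R) :
    (Matrix.of fun i j : Fin n => v j ^ (n - 1 - (i : ℕ))).det =
    ∏ i : Fin n, ∏ j ∈ Finset.Ioi i, (v i - v j) := by
  rw [← Matrix.det_submatrix_equiv_self (Fin.revPerm) ]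
  have : (Matrix.of fun i j : Fin n => v j ^ (n - 1 - (i : ℕ))).submatrix Fin.revPerm Fin.revPerm
      = (Matrix.vandermonde (fun j => v j.rev)).transpose := by
    ext i j
    simp [Matrix.vandermonde, Matrix.submatrix, Fin.rev]
    congr 1
    omega
  rw [this, Matrix.det_transpose, Matrix.det_vandermonde]
  exact rev_pairs_prod n v

lemma prod_Icc_eq_fin (c n : ℕ) (g : ℕ → R) :
    (∏ j ∈ Finset.Icc (c + 1) (c + n), g j) = ∏ j : Fin n, g (c + j + 1) := by
  symm
  refine Finset.prod_bij (fun j _ => c + (j : ℕ) + 1) ?_ ?_ ?_ ?_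
  · intro j _; simp only [Finset.mem_Icc]; omega
  · intro i _ j _ h
    have h : c + (i : ℕ) + 1 = c + (j : ℕ) + 1 := h
    exact Fin.ext (by omega)
  · intro j hj
    simp only [Finset.mem_Icc] at hj
    refine ⟨⟨j - c - 1, by omega⟩, Finset.mem_univ _, ?_⟩
    show c + (j - c - 1) + 1 = j
    omega
  · intro j _; rfl

lemma pairs_Icc_eq_fin (c n : ℕ) (f : ℕ → ℕ → R) :
    (∏ i ∈ Finset.Icc (c + 1) (c + n), ∏ j ∈ Finset.Icc (i + 1) (c + n), f i j) =
    ∏ i : Fin n, ∏ j ∈ Finset.Ioi i, f (c + i + 1) (c + j + 1) := by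
  rw [Finset.prod_sigma', Finset.prod_sigma']
  symm
  refine Finset.prod_bij
    (fun p _ => (⟨c + (p.1 : ℕ) + 1, c + (p.2 : ℕ) + 1⟩ : Σ _ : ℕ, ℕ)) ?_ ?_ ?_ ?_
  · rintro ⟨i, j⟩ h
    simp only [Finset.mem_sigma, Finset.mem_univ, Finset.mem_Ioi, true_and,
      Finset.mem_Icc] at h ⊢
    have hij : (i : ℕ) < (j : ℕ) := h
    have := j.isLt
    omega
  · rintro ⟨i1, j1⟩ _ ⟨i2, j2⟩ _ h
    simp only [Sigma.mk.inj_iff, heq_eq_eq] at h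
    obtain ⟨h1, h2⟩ := h
    have hi : i1 = i2 := Fin.ext (by omega)
    have hj : j1 = j2 := Fin.ext (by omega)
    simp [hi, hj]
  · rintro ⟨i, j⟩ h
    simp only [Finset.mem_sigma, Finset.mem_Icc] at h
    refine ⟨⟨⟨i - c - 1, by omega⟩, ⟨j - c - 1, by omega⟩⟩, ?_, ?_⟩
    · simp only [Finset.mem_sigma, Finset.mem_univ, Finset.mem_Ioi, true_and,
        Fin.lt_iff_val_lt_val]
      omega
    · have h1 : c + (i - c - 1) + 1 = i := by omega
      have h2 : c + (j - c - 1) + 1 = j := by omega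
      show (⟨c + (i - c - 1) + 1, c + (j - c - 1) + 1⟩ : Σ _ : ℕ, ℕ) = ⟨i, j⟩
      rw [h1, h2]
  · rintro ⟨i, j⟩ _; rfl

theorem haiman_determinant_max_key_shape_reduced (a b : ℕ) (hb : 1 ≤ b) (hab : b ≤ a)
    (x w : ℕ → R) :
    Matrix.det (Matrix.of fun i j : Fin (a + b) =>
        if (i : ℕ) < a then x ((j : ℕ) + 1) ^ (a - 1 - (i : ℕ))
        else if (j : ℕ) < a then 0
        else x ((j : ℕ) + 1) ^ (b - 1 - ((i : ℕ) - a)) * w ((j : ℕ) + 1)) =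
      (∏ i ∈ Finset.Icc 1 a, ∏ j ∈ Finset.Icc (i + 1) a, (x i - x j)) *
        (∏ j ∈ Finset.Icc (a + 1) (a + b), w j) *
        ∏ i ∈ Finset.Icc (a + 1) (a + b), ∏ j ∈ Finset.Icc (i + 1) (a + b), (x i - x j) := by
  set M : Matrix (Fin (a + b)) (Fin (a + b)) R := Matrix.of fun i j : Fin (a + b) =>
      if (i : ℕ) < a then x ((j : ℕ) + 1) ^ (a - 1 - (i : ℕ))
      else if (j : ℕ) < a then 0
      else x ((j : ℕ) + 1) ^ (b - 1 - ((i : ℕ) - a)) * w ((j : ℕ) + 1) with hMdef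
  set A : Matrix (Fin a) (Fin a) R :=
    Matrix.of fun i j : Fin a => x ((j : ℕ) + 1) ^ (a - 1 - (i : ℕ)) with hA
  set B : Matrix (Fin a) (Fin b) R :=
    Matrix.of fun i j => x (a + (j : ℕ) + 1) ^ (a - 1 - (i : ℕ)) with hB
  set D : Matrix (Fin b) (Fin b) R :=
    Matrix.of fun i j => w (a + (j : ℕ) + 1) * x (a + (j : ℕ) + 1) ^ (b - 1 - (i : ℕ)) with hD
  have hsub : M.submatrix finSumFinEquiv finSumFinEquiv = Matrix.fromBlocks A B 0 D := by
    ext p q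
    rcases p with i | i <;> rcases q with j | j <;>
      simp only [Matrix.submatrix_apply, finSumFinEquiv_apply_left, finSumFinEquiv_apply_right,
        Matrix.fromBlocks_apply₁₁, Matrix.fromBlocks_apply₁₂, Matrix.fromBlocks_apply₂₁,
        Matrix.fromBlocks_apply₂₂, Matrix.of_apply, Fin.coe_castAdd, Fin.coe_natAdd,
        Matrix.zero_apply, hMdef, hA, hB, hD] <;>
    split_ifs with h1 h2 <;>
      first
        | rfl
        | (exfalso; omega)
        | (rw [mul_comm, Nat.add_sub_cancel_left])
  have hdet : M.det = A.det * D.det := by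
    rw [← Matrix.det_submatrix_equiv_self finSumFinEquiv M, hsub,
      Matrix.det_fromBlocks_zero₂₁]
  have hAdet : A.det = ∏ i : Fin a, ∏ j ∈ Finset.Ioi i, (x ((i : ℕ) + 1) - x ((j : ℕ) + 1)) :=
    det_rev_vandermonde a (fun j => x ((j : ℕ) + 1))
  have hDdet : D.det = (∏ j : Fin b, w (a + (j : ℕ) + 1)) *
      ∏ i : Fin b, ∏ j ∈ Finset.Ioi i, (x (a + (i : ℕ) + 1) - x (a + (j : ℕ) + 1)) := by
    have := Matrix.det_mul_row (fun j : Fin b => w (a + (j : ℕ) + 1))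
      (Matrix.of fun i j : Fin b => x (a + (j : ℕ) + 1) ^ (b - 1 - (i : ℕ)))
    rw [hD]
    rw [show (Matrix.of fun i j : Fin b =>
        w (a + (j : ℕ) + 1) * x (a + (j : ℕ) + 1) ^ (b - 1 - (i : ℕ))) =
      Matrix.of fun i j : Fin b => (fun j : Fin b => w (a + (j : ℕ) + 1)) j *
        (Matrix.of fun i j : Fin b => x (a + (j : ℕ) + 1) ^ (b - 1 - (i : ℕ))) i j from rfl]
    rw [this, det_rev_vandermonde b (fun j => x (a + (j : ℕ) + 1))]
  have r1 : (∏ i ∈ Finset.Icc 1 a, ∏ j ∈ Finset.Icc (i + 1) a, (x i - x j)) =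
      ∏ i : Fin a, ∏ j ∈ Finset.Ioi i, (x ((i : ℕ) + 1) - x ((j : ℕ) + 1)) := by
    have := pairs_Icc_eq_fin (R := R) 0 a (fun i j => x i - x j)
    simpa using this
  have r2 : (∏ j ∈ Finset.Icc (a + 1) (a + b), w j) = ∏ j : Fin b, w (a + (j : ℕ) + 1) :=
    prod_Icc_eq_fin a b w
  have r3 : (∏ i ∈ Finset.Icc (a + 1) (a + b), ∏ j ∈ Finset.Icc (i + 1) (a + b), (x i - x j)) =
      ∏ i : Fin b, ∏ j ∈ Finset.Ioi i, (x (a + (i : ℕ) + 1) - x (a + (j : ℕ) + 1)) :=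
    pairs_Icc_eq_fin a b (fun i j => x i - x j)
  rw [hdet, hAdet, hDdet, r1, r2, r3]
  ring
end

section
/- Let a ≥ b ≥ 1, and work in k[x_1,...,x_{a+b}, c_1, c_2]. Set y_j := c_1 for 1 ≤ j ≤ a and y_j := c_2 for a+1 ≤ j ≤ a+b. Let M be the (a+b)×(a+b) matrix whose rows are: for 1 ≤ i ≤ a, the row (x_j^{a-i})_{j=1,...,a+b}; and for 1 ≤ s ≤ b, the row (x_j^{b-s}·y_j)_{j=1,...,a+b}. Then det(M) = (c_2 − c_1)^b · ∏_{1≤i<j≤a}(x_i − x_j) · ∏_{a+1≤i<j≤a+b}(x_i − x_j). -/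
open Finset

variable {R : Type*} [CommRing R]

open Matrix

lemma prod_pairs_rev' {n : ℕ} (v : Fin n → R) :
    (∏ i : Fin n, ∏ j ∈ Finset.Ioi i, (v j.rev - v i.rev)) =
    ∏ i : Fin n, ∏ j ∈ Finset.Ioi i, (v i - v j) := by
  rw [Finset.prod_sigma', Finset.prod_sigma']
  refine Finset.prod_bij (fun p _ => (⟨p.2.rev, p.1.rev⟩ : Σ _ : Fin n, Fin n)) ?_ ?_ ?_ ?_
  · rintro ⟨i, j⟩ h
    simp only [Finset.mem_sigma, Finset.mem_univ, Finset.mem_Ioi, true_and] at h ⊢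
    exact Fin.rev_lt_rev.mpr h
  · rintro ⟨i1, j1⟩ h1 ⟨i2, j2⟩ h2 heq
    simp only [Sigma.ext_iff, heq_eq_eq] at heq ⊢
    exact ⟨Fin.rev_injective heq.2, Fin.rev_injective heq.1⟩
  · rintro ⟨i, j⟩ h
    simp only [Finset.mem_sigma, Finset.mem_univ, Finset.mem_Ioi, true_and] at h
    refine ⟨⟨j.rev, i.rev⟩, ?_, ?_⟩
    · simp only [Finset.mem_sigma, Finset.mem_univ, Finset.mem_Ioi, true_and]
      exact Fin.rev_lt_rev.mpr h
    · simp [Fin.rev_rev]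
  · rintro ⟨i, j⟩ h
    rfl

lemma det_antiVandermonde' {n : ℕ} (v : Fin n → R) :
    Matrix.det (Matrix.of fun i j : Fin n => v j ^ (n - 1 - (i : ℕ))) =
    ∏ i : Fin n, ∏ j ∈ Finset.Ioi i, (v i - v j) := by
  rw [← Matrix.det_submatrix_equiv_self Fin.revPerm]
  have h : (Matrix.of fun i j : Fin n => v j ^ (n - 1 - (i : ℕ))).submatrix
        ⇑Fin.revPerm ⇑Fin.revPerm = (Matrix.vandermonde fun i : Fin n => v i.rev)ᵀ := by
    ext i j
    simp only [Matrix.submatrix_apply, Matrix.of_apply, Matrix.transpose_apply,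
      Matrix.vandermonde_apply, Fin.revPerm_apply]
    congr 1
    have hi := i.is_lt
    simp only [Fin.val_rev]
    omega
  rw [h, Matrix.det_transpose, Matrix.det_vandermonde]
  exact prod_pairs_rev' v

lemma prod_Icc_pairs' (n t : ℕ) (f : ℕ → ℕ → R) :
    (∏ i : Fin n, ∏ j ∈ Finset.Ioi i, f (t + (i : ℕ) + 1) (t + (j : ℕ) + 1)) =
    ∏ i ∈ Finset.Icc (t + 1) (t + n), ∏ j ∈ Finset.Icc (i + 1) (t + n), f i j := by
  rw [Finset.prod_sigma', Finset.prod_sigma']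
  refine Finset.prod_bij (fun (p : Σ _ : Fin n, Fin n) _ =>
    (⟨t + p.1 + 1, t + p.2 + 1⟩ : Σ _ : ℕ, ℕ)) ?_ ?_ ?_ ?_
  · rintro ⟨i, j⟩ h
    simp only [Finset.mem_sigma, Finset.mem_univ, Finset.mem_Ioi, true_and] at h
    have hi := i.is_lt; have hj := j.is_lt
    simp only [Finset.mem_sigma, Finset.mem_Icc]
    have : (i : ℕ) < (j : ℕ) := h
    omega
  · rintro ⟨i1, j1⟩ h1 ⟨i2, j2⟩ h2 heq
    simp only [Sigma.ext_iff, heq_eq_eq] at heq ⊢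
    exact ⟨Fin.ext (by omega), Fin.ext (by omega)⟩
  · rintro ⟨i, j⟩ h
    simp only [Finset.mem_sigma, Finset.mem_Icc] at h
    refine ⟨⟨⟨i - t - 1, by omega⟩, ⟨j - t - 1, by omega⟩⟩, ?_, ?_⟩
    · simp only [Finset.mem_sigma, Finset.mem_univ, Finset.mem_Ioi, true_and]
      show (i - t - 1 : ℕ) < (j - t - 1 : ℕ)
      omega
    · simp only [Sigma.ext_iff, heq_eq_eq]
      constructor <;> omega
  · rintro ⟨i, j⟩ h
    rfl

theorem haiman_determinant_max_key_shape_specialized (a b : ℕ) (hb : 1 ≤ b) (hab : b ≤ a)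
    (x : ℕ → R) (c₁ c₂ : R) (y : ℕ → R) (hy : ∀ j, 1 ≤ j → j ≤ a + b → y j = if j ≤ a then c₁ else c₂) :
    Matrix.det (Matrix.of fun i j : Fin (a + b) =>
        if (i : ℕ) < a then x ((j : ℕ) + 1) ^ (a - 1 - (i : ℕ))
        else x ((j : ℕ) + 1) ^ (b - 1 - ((i : ℕ) - a)) * y ((j : ℕ) + 1)) =
      (c₂ - c₁) ^ b * (∏ i ∈ Finset.Icc 1 a, ∏ j ∈ Finset.Icc (i + 1) a, (x i - x j)) *
        ∏ i ∈ Finset.Icc (a + 1) (a + b), ∏ j ∈ Finset.Icc (i + 1) (a + b), (x i - x j) := by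
  set M : Matrix (Fin (a + b)) (Fin (a + b)) R := Matrix.of fun i j : Fin (a + b) =>
    if (i : ℕ) < a then x ((j : ℕ) + 1) ^ (a - 1 - (i : ℕ))
    else x ((j : ℕ) + 1) ^ (b - 1 - ((i : ℕ) - a)) * y ((j : ℕ) + 1) with hMdef
  set M' : Matrix (Fin (a + b)) (Fin (a + b)) R := Matrix.of fun i j : Fin (a + b) =>
    if (i : ℕ) < a then x ((j : ℕ) + 1) ^ (a - 1 - (i : ℕ))
    else x ((j : ℕ) + 1) ^ (b - 1 - ((i : ℕ) - a)) * (y ((j : ℕ) + 1) - c₁) with hM'def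
  set L : Matrix (Fin (a + b)) (Fin (a + b)) R := Matrix.of fun i j : Fin (a + b) =>
    (if i = j then (1 : R) else 0) +
      (if (i : ℕ) = (j : ℕ) + b ∧ a ≤ (i : ℕ) then c₁ else 0) with hLdef
  have hM : M = L * M' := by
    ext i k
    rw [Matrix.mul_apply]
    simp only [hLdef, Matrix.of_apply, add_mul, Finset.sum_add_distrib, ite_mul, one_mul,
      zero_mul, Finset.sum_ite_eq, Finset.mem_univ, if_true]
    by_cases hia : (i : ℕ) < a
    · have h0 : (∑ j : Fin (a + b),
          if (i : ℕ) = (j : ℕ) + b ∧ a ≤ (i : ℕ) then c₁ * M' j k else 0) = 0 := by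
        apply Finset.sum_eq_zero
        intro j _
        rw [if_neg]
        omega
      rw [h0, add_zero]
      simp only [hMdef, hM'def, Matrix.of_apply, if_pos hia]
    · have hi := i.is_lt
      have hj0 : ((i : ℕ) - b) < a + b := by omega
      set j₀ : Fin (a + b) := ⟨(i : ℕ) - b, hj0⟩ with hj₀
      have h1 : (∑ j : Fin (a + b),
          if (i : ℕ) = (j : ℕ) + b ∧ a ≤ (i : ℕ) then c₁ * M' j k else 0)
          = c₁ * M' j₀ k := by
        rw [Finset.sum_eq_single j₀]
        · rw [if_pos ⟨show (i : ℕ) = (i : ℕ) - b + b by omega, by omega⟩]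
        · intro j _ hne
          rw [if_neg]
          rintro ⟨h2, -⟩
          exact hne (Fin.ext (show (j : ℕ) = (i : ℕ) - b by omega))
        · intro h; exact absurd (Finset.mem_univ j₀) h
      rw [h1]
      have hj0a : ((j₀ : ℕ)) < a := show (i : ℕ) - b < a by omega
      simp only [hMdef, hM'def, Matrix.of_apply, if_neg hia, if_pos hj0a]
      have hexp : a - 1 - (j₀ : ℕ) = b - 1 - ((i : ℕ) - a) :=
        show a - 1 - ((i : ℕ) - b) = b - 1 - ((i : ℕ) - a) by omega
      rw [hexp]
      ring
  have hdetL : L.det = 1 := by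
    rw [Matrix.det_of_lowerTriangular L ?_]
    · apply Finset.prod_eq_one
      intro i _
      show (if i = i then (1 : R) else 0) +
          (if (i : ℕ) = (i : ℕ) + b ∧ a ≤ (i : ℕ) then c₁ else 0) = 1
      rw [if_pos rfl, if_neg (by omega), add_zero]
    · intro i j hij
      rw [OrderDual.toDual_lt_toDual] at hij
      show (if i = j then (1 : R) else 0) +
          (if (i : ℕ) = (j : ℕ) + b ∧ a ≤ (i : ℕ) then c₁ else 0) = 0
      have hij' : (i : ℕ) < (j : ℕ) := hij
      rw [if_neg (by exact fun h => absurd h (ne_of_lt hij)), if_neg (by omega), add_zero]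
  have hblock : M'.det =
      (∏ i : Fin a, ∏ j ∈ Finset.Ioi i, (x ((i : ℕ) + 1) - x ((j : ℕ) + 1))) *
      ((c₂ - c₁) ^ b *
        ∏ i : Fin b, ∏ j ∈ Finset.Ioi i, (x (a + (i : ℕ) + 1) - x (a + (j : ℕ) + 1))) := by
    rw [← Matrix.det_submatrix_equiv_self finSumFinEquiv M']
    have heq : M'.submatrix ⇑finSumFinEquiv ⇑finSumFinEquiv =
        Matrix.fromBlocks
          (Matrix.of fun i j : Fin a => x ((j : ℕ) + 1) ^ (a - 1 - (i : ℕ)))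
          (Matrix.of fun (i : Fin a) (j : Fin b) => x (a + (j : ℕ) + 1) ^ (a - 1 - (i : ℕ)))
          0
          ((c₂ - c₁) • Matrix.of fun i j : Fin b => x (a + (j : ℕ) + 1) ^ (b - 1 - (i : ℕ))) := by
      ext i j
      rcases i with i | i <;> rcases j with j | j <;>
        simp only [Matrix.submatrix_apply, finSumFinEquiv_apply_left, finSumFinEquiv_apply_right,
          Matrix.fromBlocks_apply₁₁, Matrix.fromBlocks_apply₁₂, Matrix.fromBlocks_apply₂₁,
          Matrix.fromBlocks_apply₂₂, Fin.coe_castAdd, Fin.coe_natAdd, hM'def, Matrix.of_apply,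
          Matrix.zero_apply, Matrix.smul_apply, smul_eq_mul]
      · rw [if_pos i.is_lt]
      · rw [if_pos i.is_lt]
      · rw [if_neg (by omega)]
        have hyv : y ((j : ℕ) + 1) = c₁ := by
          rw [hy ((j : ℕ) + 1) (by omega) (by have := j.is_lt; omega)]
          rw [if_pos (by have := j.is_lt; omega)]
        rw [hyv]
        ring
      · rw [if_neg (by omega)]
        have hyv : y (a + (j : ℕ) + 1) = c₂ := by
          rw [hy (a + (j : ℕ) + 1) (by omega) (by have := j.is_lt; omega)]
          rw [if_neg (by omega)]
        rw [hyv]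
        have : a + (i : ℕ) - a = (i : ℕ) := by omega
        rw [this]
        ring
    rw [heq, Matrix.det_fromBlocks_zero₂₁, Matrix.det_smul, Fintype.card_fin,
      det_antiVandermonde' (fun j : Fin a => x ((j : ℕ) + 1)),
      det_antiVandermonde' (fun j : Fin b => x (a + (j : ℕ) + 1))]
  have hp1 : (∏ i : Fin a, ∏ j ∈ Finset.Ioi i, (x ((i : ℕ) + 1) - x ((j : ℕ) + 1))) =
      ∏ i ∈ Finset.Icc 1 a, ∏ j ∈ Finset.Icc (i + 1) a, (x i - x j) := by
    have := prod_Icc_pairs' a 0 (fun i j => x i - x j)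
    simpa using this
  have hp2 : (∏ i : Fin b, ∏ j ∈ Finset.Ioi i, (x (a + (i : ℕ) + 1) - x (a + (j : ℕ) + 1))) =
      ∏ i ∈ Finset.Icc (a + 1) (a + b), ∏ j ∈ Finset.Icc (i + 1) (a + b), (x i - x j) := by
    exact prod_Icc_pairs' b a (fun i j => x i - x j)
  rw [hM, Matrix.det_mul, hdetL, one_mul, hblock, hp1, hp2]
  ring
end
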